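/- Let H_A ⊗ H_B be a finite-dimensional bipartite Hilbert space, ω a positive definite density matrix with reduced state ρ = Tr_B ω, and let Φ be the partial trace map Tr_B. Then for any Hermitian operator O on H_A ⊗ H_B, the Bures norm is contractive: ‖Tr_B O‖_ρ ≤ ‖O‖_ω, where the Bures norms are defined via the eigendecompositions of ρ and ω respectively as ‖X‖_σ² = ∑_{i,j} 2|⟨i|X|j⟩|²/(q_i+q_j). -/

import Mathlib

open Finset
open scoped ComplexOrder
open scoped Kronecker
open Matrix

/-- Partial trace over the second (B) factor. -/
noncomputable def ptraceB {a b : ℕ} (ω : Matrix (Fin a × Fin b) (Fin a × Fin b) ℂ) :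
    Matrix (Fin a) (Fin a) ℂ :=
  Matrix.of fun i j => ∑ k : Fin b, ω (i, k) (j, k)

/-- Matrix element ⟨i|O|j⟩ in the basis `v`. -/
noncomputable def matElem {ι : Type*} [Fintype ι] (v : ι → (ι → ℂ))
    (O : Matrix ι ι ℂ) (i j : ι) : ℂ :=
  dotProduct (star (v i)) (O.mulVec (v j))

/-- Bures norm squared of `O` with respect to the spectral data `(p, v)`. -/
noncomputable def buresSq {ι : Type*} [Fintype ι] (p : ι → ℝ) (v : ι → (ι → ℂ))
    (O : Matrix ι ι ℂ) : ℝ :=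
  ∑ i, ∑ j, 2 * ‖matElem v O i j‖ ^ 2 / (p i + p j)

lemma key_ineq (c : ℝ) (hc : 0 < c) (x z : ℂ) :
    2 * (x * (starRingEnd ℂ) z).re - c / 2 * ‖z‖ ^ 2 ≤ 2 * ‖x‖ ^ 2 / c := by
  rw [Complex.sq_norm, Complex.sq_norm]
  have hx : (x * (starRingEnd ℂ) z).re = x.re * z.re + x.im * z.im := by
    simp [Complex.mul_re, Complex.conj_re, Complex.conj_im]
  rw [hx, Complex.normSq_apply, Complex.normSq_apply, le_div_iff₀ hc]
  nlinarith [sq_nonneg (c * z.re - 2 * x.re), sq_nonneg (c * z.im - 2 * x.im), hc.le]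

lemma trace_mul_kron_one {a b : ℕ} (M : Matrix (Fin a × Fin b) (Fin a × Fin b) ℂ)
    (A : Matrix (Fin a) (Fin a) ℂ) :
    (M * (A ⊗ₖ (1 : Matrix (Fin b) (Fin b) ℂ))).trace = ((ptraceB M) * A).trace := by
  simp only [Matrix.trace, Matrix.diag, Matrix.mul_apply, ptraceB, Matrix.kroneckerMap_apply,
    Matrix.of_apply, Matrix.one_apply, mul_ite, mul_one, mul_zero, Fintype.sum_prod_type,
    Finset.sum_ite_eq', Finset.mem_univ, if_true, Finset.sum_mul]
  exact Finset.sum_congr rfl fun x _ => Finset.sum_comm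

noncomputable def bmat {ι : Type*} (v : ι → (ι → ℂ)) : Matrix ι ι ℂ :=
  Matrix.of fun x i => v i x

lemma bmat_unitary {ι : Type*} [Fintype ι] [DecidableEq ι] (v : ι → (ι → ℂ))
    (h : ∀ i j, dotProduct (star (v i)) (v j) = if i = j then 1 else 0) :
    (bmat v)ᴴ * bmat v = 1 := by
  ext i j
  simpa [Matrix.mul_apply, bmat, Matrix.conjTranspose_apply, Matrix.one_apply,
    dotProduct, Pi.star_apply] using h i j

lemma matElem_eq {ι : Type*} [Fintype ι] (v : ι → (ι → ℂ)) (X : Matrix ι ι ℂ) (i j : ι) :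
    matElem v X i j = ((bmat v)ᴴ * X * (bmat v)) i j := by
  simp only [matElem, dotProduct, Matrix.mulVec, Matrix.mul_apply, bmat,
    Matrix.conjTranspose_apply, Matrix.of_apply, Pi.star_apply, dotProduct,
    Finset.sum_mul, Finset.mul_sum]
  rw [Finset.sum_comm]
  exact Finset.sum_congr rfl fun x _ => Finset.sum_congr rfl fun y _ => by ring

lemma conj_eigen {ι : Type*} [Fintype ι] [DecidableEq ι] (v : ι → (ι → ℂ))
    (ρ : Matrix ι ι ℂ) (p : ι → ℝ) (heig : ∀ i, ρ.mulVec (v i) = (p i : ℂ) • v i) :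
    ρ * bmat v = bmat v * Matrix.diagonal (fun i => (p i : ℂ)) := by
  ext x j
  have := congrFun (heig j) x
  simp only [Matrix.mulVec, dotProduct, Pi.smul_apply, smul_eq_mul] at this
  simp only [Matrix.mul_apply, bmat, Matrix.of_apply, Matrix.diagonal_apply, mul_ite, mul_zero,
    Finset.sum_ite_eq', Finset.mem_univ, if_true]
  exact this.trans (mul_comm _ _)

lemma trace_conj2 {ι : Type*} [Fintype ι] [DecidableEq ι] (U : Matrix ι ι ℂ) (hU' : U * Uᴴ = 1)
    (A B : Matrix ι ι ℂ) : ((Uᴴ * A * U) * (Uᴴ * B * U)).trace = (A * B).trace := by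
  have h : (Uᴴ * A * U) * (Uᴴ * B * U) = Uᴴ * (A * B) * U := by
    calc (Uᴴ * A * U) * (Uᴴ * B * U) = Uᴴ * (A * ((U * Uᴴ) * (B * U))) := by
          simp only [Matrix.mul_assoc]
      _ = Uᴴ * (A * B) * U := by rw [hU']; simp only [Matrix.one_mul, Matrix.mul_assoc]
  rw [h, Matrix.trace_mul_cycle, ← Matrix.mul_assoc, hU', Matrix.one_mul]

lemma conj_of_conj {ι : Type*} [Fintype ι] [DecidableEq ι] (U : Matrix ι ι ℂ) (hU : Uᴴ * U = 1)
    (B : Matrix ι ι ℂ) : Uᴴ * (U * B * Uᴴ) * U = B := by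
  calc Uᴴ * (U * B * Uᴴ) * U = (Uᴴ * U) * B * (Uᴴ * U) := by simp only [Matrix.mul_assoc]
    _ = B := by rw [hU, Matrix.one_mul, Matrix.mul_one]

lemma conjmul {ι : Type*} [Fintype ι] [DecidableEq ι] (U : Matrix ι ι ℂ) (hU' : U * Uᴴ = 1)
    (A B : Matrix ι ι ℂ) : (Uᴴ * A * U) * (Uᴴ * B * U) = Uᴴ * (A * B) * U := by
  calc (Uᴴ * A * U) * (Uᴴ * B * U) = Uᴴ * (A * ((U * Uᴴ) * (B * U))) := by
        simp only [Matrix.mul_assoc]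
    _ = Uᴴ * (A * B) * U := by rw [hU']; simp only [Matrix.one_mul, Matrix.mul_assoc]

lemma trace_diag_mul {ι : Type*} [Fintype ι] [DecidableEq ι] (d : ι → ℂ) (M : Matrix ι ι ℂ) :
    (Matrix.diagonal d * M).trace = ∑ i, d i * M i i := by
  simp [Matrix.trace, Matrix.diag, Matrix.mul_apply, Matrix.diagonal_apply, Finset.sum_ite_eq,
    Finset.mem_univ]

lemma trace_mul_conj {ι : Type*} [Fintype ι] (U A B : Matrix ι ι ℂ) :
    (A * (U * B * Uᴴ)).trace = ((Uᴴ * A * U) * B).trace := by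
  rw [show A * (U * B * Uᴴ) = ((A * U) * B) * Uᴴ by simp only [Matrix.mul_assoc],
    Matrix.trace_mul_cycle, show Uᴴ * (A * U) * B = (Uᴴ * A * U) * B by
      simp only [Matrix.mul_assoc]]

/-- Monotonicity of the Bures norm under the partial trace: for a faithful state
    ω on H_A ⊗ H_B with reduced state ρ = Tr_B ω, and any Hermitian O,
    ‖Tr_B O‖_ρ ≤ ‖O‖_ω, the Bures norms being computed from the spectral data
    (q, w) of ω and (p, v) of ρ. -/
theorem bures_contractive_partial_trace {a b : ℕ}
    (ω O : Matrix (Fin a × Fin b) (Fin a × Fin b) ℂ)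
    (ρ : Matrix (Fin a) (Fin a) ℂ)
    (q : Fin a × Fin b → ℝ) (w : Fin a × Fin b → (Fin a × Fin b → ℂ))
    (p : Fin a → ℝ) (v : Fin a → (Fin a → ℂ))
    (hω : ω.PosDef) (htrω : ω.trace = 1) (hρ : ρ = ptraceB ω)
    (hq : ∀ i, 0 < q i) (hp : ∀ i, 0 < p i)
    (horthw : ∀ i j, dotProduct (star (w i)) (w j) = if i = j then 1 else 0)
    (heigw : ∀ i, ω.mulVec (w i) = (q i : ℂ) • w i)
    (horthv : ∀ i j, dotProduct (star (v i)) (v j) = if i = j then 1 else 0)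
    (heigv : ∀ i, ρ.mulVec (v i) = (p i : ℂ) • v i)
    (hO : O.IsHermitian) :
    Real.sqrt (buresSq p v (ptraceB O)) ≤ Real.sqrt (buresSq q w O) := by
  apply Real.sqrt_le_sqrt
  set V := bmat v with hVdef
  set W := bmat w with hWdef
  have hV : Vᴴ * V = 1 := bmat_unitary v horthv
  have hV' : V * Vᴴ = 1 := mul_eq_one_comm.mp hV
  have hW : Wᴴ * W = 1 := bmat_unitary w horthw
  have hW' : W * Wᴴ = 1 := mul_eq_one_comm.mp hW
  have hρV : Vᴴ * ρ * V = Matrix.diagonal (fun i => (p i : ℂ)) := by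
    rw [Matrix.mul_assoc, conj_eigen v ρ p heigv, ← Matrix.mul_assoc, hV, Matrix.one_mul]
  have hωW : Wᴴ * ω * W = Matrix.diagonal (fun k => (q k : ℂ)) := by
    rw [Matrix.mul_assoc, conj_eigen w ω q heigw, ← Matrix.mul_assoc, hW, Matrix.one_mul]
  set X : Matrix (Fin a) (Fin a) ℂ := ptraceB O with hXdef
  have hXh : X.IsHermitian := by
    ext i j
    simp only [Matrix.conjTranspose_apply, hXdef, ptraceB, Matrix.of_apply, star_sum]
    exact Finset.sum_congr rfl fun k _ => hO.apply _ _
  set X' := Vᴴ * X * V with hX'def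
  have hX'h : X'.IsHermitian := Matrix.isHermitian_conjTranspose_mul_mul V hXh
  set Z' : Matrix (Fin a) (Fin a) ℂ :=
    Matrix.of (fun i j => ((2 / (p i + p j) : ℝ) : ℂ) * X' i j) with hZ'def
  have hZ'h : Z'.IsHermitian := by
    ext i j
    show star (Z' j i) = Z' i j
    rw [hZ'def]
    show star ((((2 : ℝ) / (p j + p i) : ℝ) : ℂ) * X' j i) = _
    rw [star_mul', Complex.star_def, Complex.conj_ofReal, add_comm (p j)]
    simp only [Matrix.of_apply]
    congr 1
    exact hX'h.apply i j
  set Z := V * Z' * Vᴴ with hZdef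
  have hZh : Z.IsHermitian := Matrix.isHermitian_mul_mul_conjTranspose V hZ'h
  set Zt := Z ⊗ₖ (1 : Matrix (Fin b) (Fin b) ℂ) with hZtdef
  have hZth : Zt.IsHermitian := by
    ext k l
    show star (Zt l k) = Zt k l
    rw [hZtdef]
    obtain ⟨k1, k2⟩ := k
    obtain ⟨l1, l2⟩ := l
    show star (Z l1 k1 * (1 : Matrix (Fin b) (Fin b) ℂ) l2 k2)
        = Z k1 l1 * (1 : Matrix (Fin b) (Fin b) ℂ) k2 l2
    by_cases h : l2 = k2
    · subst h; simp [hZh.apply]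
    · simp [Matrix.one_apply_ne h, Matrix.one_apply_ne (Ne.symm h)]
  set Zt' := Wᴴ * Zt * W with hZt'def
  have hZt'h : Zt'.IsHermitian := Matrix.isHermitian_conjTranspose_mul_mul W hZth
  set O' := Wᴴ * O * W with hO'def
  set S : ℝ := ∑ i, ∑ j, 2 * ‖X' i j‖ ^ 2 / (p i + p j) with hSdef
  -- rewrite the two bures quantities
  have hbp : buresSq p v X = S := by
    rw [hSdef, buresSq]
    refine Finset.sum_congr rfl fun i _ => Finset.sum_congr rfl fun j _ => ?_
    rw [matElem_eq, ← hVdef, ← hX'def]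
  have hbq : buresSq q w O = ∑ k, ∑ l, 2 * ‖O' k l‖ ^ 2 / (q k + q l) := by
    rw [buresSq]
    refine Finset.sum_congr rfl fun k _ => Finset.sum_congr rfl fun l _ => ?_
    rw [matElem_eq, ← hWdef, ← hO'def]
  -- trace identities
  have htrXZ : (X * Z).trace = (X' * Z').trace := by
    rw [hZdef, trace_mul_conj V X Z', ← hX'def]
  have htrXZre : ((X' * Z').trace).re = S := by
    rw [hSdef]
    simp only [Matrix.trace, Matrix.diag, Matrix.mul_apply, Complex.re_sum]
    refine Finset.sum_congr rfl fun i _ => Finset.sum_congr rfl fun j _ => ?_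
    rw [hZ'def]
    simp only [Matrix.of_apply]
    rw [← hX'h.apply j i]
    rw [show X' i j * ((((2 : ℝ) / (p j + p i) : ℝ) : ℂ) * star (X' i j))
        = ((((2 : ℝ) / (p j + p i) : ℝ) : ℂ) * (X' i j * star (X' i j))) from by ring]
    rw [Complex.star_def, Complex.mul_conj, ← Complex.ofReal_mul, Complex.ofReal_re,
      ← Complex.sq_norm, add_comm (p j)]
    ring
  have htrOZt : (O * Zt).trace = (X * Z).trace := by
    rw [hZtdef, trace_mul_kron_one O Z, ← hXdef]
  have htrO'Zt' : (O' * Zt').trace = (O * Zt).trace := by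
    rw [hO'def, hZt'def, trace_conj2 W hW' O Zt]
  have hZtZt : Zt * Zt = (Z * Z) ⊗ₖ (1 : Matrix (Fin b) (Fin b) ℂ) := by
    rw [hZtdef, ← Matrix.mul_kronecker_mul, Matrix.one_mul]
  have hZZ : Z * Z = V * (Z' * Z') * Vᴴ := by
    rw [hZdef]
    calc (V * Z' * Vᴴ) * (V * Z' * Vᴴ) = V * (Z' * ((Vᴴ * V) * (Z' * Vᴴ))) := by
          simp only [Matrix.mul_assoc]
      _ = V * (Z' * Z') * Vᴴ := by rw [hV]; simp only [Matrix.one_mul, Matrix.mul_assoc]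
  have htrωZZ : (ω * (Zt * Zt)).trace
      = (Matrix.diagonal (fun i => (p i : ℂ)) * (Z' * Z')).trace := by
    rw [hZtZt, trace_mul_kron_one ω (Z * Z), ← hρ, hZZ, trace_mul_conj V ρ (Z' * Z'), hρV]
  -- symmetry facts
  have hnsym : ∀ i j, Complex.normSq (X' j i) = Complex.normSq (X' i j) := fun i j => by
    rw [← hX'h.apply j i]; exact Complex.normSq_conj _
  have hmsym : ∀ k l, Complex.normSq (Zt' l k) = Complex.normSq (Zt' k l) := fun k l => by
    rw [← hZt'h.apply l k]; exact Complex.normSq_conj _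
  -- diagonal-trace computations
  have hdiagp : ((Matrix.diagonal (fun i => (p i : ℂ)) * (Z' * Z')).trace).re
      = ∑ i, ∑ j, p i * ((2 / (p i + p j)) ^ 2 * Complex.normSq (X' i j)) := by
    rw [trace_diag_mul]
    simp only [Matrix.mul_apply, Finset.mul_sum, Complex.re_sum]
    refine Finset.sum_congr rfl fun i _ => Finset.sum_congr rfl fun j _ => ?_
    rw [hZ'def]
    simp only [Matrix.of_apply]
    rw [show (p i : ℂ) * ((((2 : ℝ) / (p i + p j) : ℝ) : ℂ) * X' i j
          * ((((2 : ℝ) / (p j + p i) : ℝ) : ℂ) * X' j i))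
        = ((p i : ℂ) * (((2 : ℝ) / (p i + p j) : ℝ) : ℂ) * (((2 : ℝ) / (p j + p i) : ℝ) : ℂ))
          * (X' i j * X' j i) from by ring]
    rw [← hX'h.apply j i, Complex.star_def, Complex.mul_conj, ← Complex.ofReal_mul,
      ← Complex.ofReal_mul, ← Complex.ofReal_mul, Complex.ofReal_re, add_comm (p j)]
    ring
  have hdiagq : ((Matrix.diagonal (fun k => (q k : ℂ)) * (Zt' * Zt')).trace).re
      = ∑ k, ∑ l, q k * Complex.normSq (Zt' k l) := by
    rw [trace_diag_mul]
    simp only [Matrix.mul_apply, Finset.mul_sum, Complex.re_sum]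
    refine Finset.sum_congr rfl fun k _ => Finset.sum_congr rfl fun l _ => ?_
    rw [show (q k : ℂ) * (Zt' k l * Zt' l k) = (q k : ℂ) * (Zt' k l * Zt' l k) from rfl,
      ← hZt'h.apply l k, Complex.star_def, Complex.mul_conj, ← Complex.ofReal_mul,
      Complex.ofReal_re]
  -- symmetrization: the p-diagonal trace equals S
  have hTswap : (∑ i, ∑ j, p i * ((2 / (p i + p j)) ^ 2 * Complex.normSq (X' i j)))
      = ∑ i, ∑ j, p j * ((2 / (p i + p j)) ^ 2 * Complex.normSq (X' i j)) := by
    rw [Finset.sum_comm]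
    refine Finset.sum_congr rfl fun i _ => Finset.sum_congr rfl fun j _ => ?_
    rw [hnsym i j, add_comm (p j)]
  have hTS : (∑ i, ∑ j, p i * ((2 / (p i + p j)) ^ 2 * Complex.normSq (X' i j))) = S := by
    have h2 : (∑ i, ∑ j, p i * ((2 / (p i + p j)) ^ 2 * Complex.normSq (X' i j)))
        + (∑ i, ∑ j, p j * ((2 / (p i + p j)) ^ 2 * Complex.normSq (X' i j))) = S + S := by
      rw [hSdef]
      simp only [← Finset.sum_add_distrib]
      refine Finset.sum_congr rfl fun i _ => Finset.sum_congr rfl fun j _ => ?_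
      have hpij : (0 : ℝ) < p i + p j := add_pos (hp i) (hp j)
      rw [Complex.sq_norm]
      field_simp
      ring
    linarith [hTswap, h2]
  have hωre : ((ω * (Zt * Zt)).trace).re = S := by rw [htrωZZ, hdiagp, hTS]
  -- the quantity A
  have hA : ((O' * Zt').trace).re = S := by rw [htrO'Zt', htrOZt, htrXZ, htrXZre]
  have hAsum : (∑ k, ∑ l, (O' k l * (starRingEnd ℂ) (Zt' k l)).re) = S := by
    rw [← hA]
    simp only [Matrix.trace, Matrix.diag, Matrix.mul_apply, Complex.re_sum]
    refine Finset.sum_congr rfl fun k _ => Finset.sum_congr rfl fun l _ => ?_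
    rw [← hZt'h.apply l k, Complex.star_def]
  -- the quantity B
  have hBsum : (∑ k, ∑ l, (q k + q l) / 2 * ‖Zt' k l‖ ^ 2) = S := by
    have hswap : (∑ k, ∑ l, q l * Complex.normSq (Zt' k l))
        = ∑ k, ∑ l, q k * Complex.normSq (Zt' k l) := by
      rw [Finset.sum_comm]
      refine Finset.sum_congr rfl fun k _ => Finset.sum_congr rfl fun l _ => ?_
      rw [hmsym k l]
    have hqs : (∑ k, ∑ l, q k * Complex.normSq (Zt' k l)) = S := by
      have h1 : Matrix.diagonal (fun k => (q k : ℂ)) * (Zt' * Zt') = (Wᴴ * ω * W)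
          * (Wᴴ * (Zt * Zt) * W) := by rw [hωW, hZt'def, conjmul W hW' Zt Zt]
      rw [← hdiagq, h1, trace_conj2 W hW' ω (Zt * Zt), hωre]
    rw [← hqs]
    have hh : ∀ k l, (q k + q l) / 2 * ‖Zt' k l‖ ^ 2
        = (q k * Complex.normSq (Zt' k l) + q l * Complex.normSq (Zt' k l)) / 2 := by
      intro k l
      rw [Complex.sq_norm]
      ring
    simp only [hh, ← Finset.sum_div, Finset.sum_add_distrib]
    rw [hswap]
    ring
  rw [hbp, hbq]
  have hstep : ∀ k l, 2 * (O' k l * (starRingEnd ℂ) (Zt' k l)).re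
      - (q k + q l) / 2 * ‖Zt' k l‖ ^ 2
      ≤ 2 * ‖O' k l‖ ^ 2 / (q k + q l) :=
    fun k l => key_ineq _ (add_pos (hq k) (hq l)) _ _
  have h1 : (∑ k, ∑ l, (2 * (O' k l * (starRingEnd ℂ) (Zt' k l)).re
      - (q k + q l) / 2 * ‖Zt' k l‖ ^ 2))
      ≤ ∑ k, ∑ l, 2 * ‖O' k l‖ ^ 2 / (q k + q l) :=
    Finset.sum_le_sum fun k _ => Finset.sum_le_sum fun l _ => hstep k l
  have h2 : (∑ k, ∑ l, (2 * (O' k l * (starRingEnd ℂ) (Zt' k l)).re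
      - (q k + q l) / 2 * ‖Zt' k l‖ ^ 2)) = 2 * S - S := by
    simp only [Finset.sum_sub_distrib, ← Finset.mul_sum]
    rw [hAsum, hBsum]
  linarith [h1, h2]
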